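/- For each positive integer m, the equation √m · √( (√(2/π) · (1−λ) · t(m) · E(W_m) / λ)^{2/(m+2)} − 1 ) = t(m) has a unique solution λ(m) ∈ (0,1), where t(m) is the two-sided 1−α quantile of the t_m distribution and E(W_m) = E(√(Q/m)) with Q ~ χ²_m. Moreover, lim_{m→∞} λ(m) exists and lies in (0,1). -/

import Mathlib

open MeasureTheory Real Set Filter

/-- Density of the chi-squared distribution with `m` degrees of freedom. -/
noncomputable def chisqPDF (m : ℕ) (q : ℝ) : ℝ :=
  if 0 < q then q ^ ((m : ℝ) / 2 - 1) * Real.exp (-q / 2) /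
    (2 ^ ((m : ℝ) / 2) * Real.Gamma ((m : ℝ) / 2)) else 0

/-- Density of `W = sqrt(Q/m)` where `Q ~ χ²_m`. -/
noncomputable def fW (m : ℕ) (w : ℝ) : ℝ := 2 * m * w * chisqPDF m (m * w ^ 2)

/-- `E(W_m)` for `W_m = sqrt(Q/m)`, `Q ~ χ²_m`. -/
noncomputable def EW (m : ℕ) : ℝ := ∫ w in Set.Ioi (0 : ℝ), w * fW m w

/-- Density of the Student t distribution with `m` degrees of freedom. -/
noncomputable def tPDF (m : ℕ) (x : ℝ) : ℝ :=
  Real.Gamma (((m : ℝ) + 1) / 2) / (Real.sqrt (m * Real.pi) * Real.Gamma ((m : ℝ) / 2)) *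
    (1 + x ^ 2 / m) ^ (-(((m : ℝ) + 1) / 2))


/-- The defining equation for `λ(m)`. -/
def lamEq (m : ℕ) (tm l : ℝ) : Prop :=
  Real.sqrt m *
      Real.sqrt ((Real.sqrt (2 / Real.pi) * (1 - l) * tm * EW m / l)
          ^ ((2 : ℝ) / ((m : ℝ) + 2)) - 1) = tm


lemma gamma_mid_sq_le {x y : ℝ} (hx : 0 < x) (hy : 0 < y) :
    Real.Gamma ((x + y) / 2) ^ 2 ≤ Real.Gamma x * Real.Gamma y := by
  have h := Real.convexOn_log_Gamma.2 (mem_Ioi.2 hx) (mem_Ioi.2 hy)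
      (by norm_num : (0:ℝ) ≤ 1/2) (by norm_num : (0:ℝ) ≤ 1/2) (by norm_num)
  simp only [Function.comp, smul_eq_mul] at h
  have hxy : (1/2 : ℝ) * x + (1/2 : ℝ) * y = (x + y) / 2 := by ring
  rw [hxy] at h
  have hm : 0 < Real.Gamma ((x + y) / 2) := Real.Gamma_pos_of_pos (by linarith)
  have hgx : 0 < Real.Gamma x := Real.Gamma_pos_of_pos hx
  have hgy : 0 < Real.Gamma y := Real.Gamma_pos_of_pos hy
  have := Real.exp_le_exp.2 (by linarith : 2 * Real.log (Real.Gamma ((x+y)/2)) ≤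
      Real.log (Real.Gamma x) + Real.log (Real.Gamma y))
  rw [Real.exp_add, Real.exp_log hgx, Real.exp_log hgy] at this
  calc Real.Gamma ((x + y) / 2) ^ 2
      = Real.exp (2 * Real.log (Real.Gamma ((x+y)/2))) := by
        rw [mul_comm, Real.exp_mul, Real.exp_log hm]; norm_num
    _ ≤ _ := this

/-- The ratio `Γ(x+1/2)/(√x Γ(x))`. -/
noncomputable def gR (x : ℝ) : ℝ := Real.Gamma (x + 1/2) / (Real.sqrt x * Real.Gamma x)

lemma gR_le_one {x : ℝ} (hx : 0 < x) : gR x ≤ 1 := by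
  have h := gamma_mid_sq_le hx (by linarith : (0:ℝ) < x + 1)
  have hx1 : (x + (x+1)) / 2 = x + 1/2 := by ring
  rw [hx1, Real.Gamma_add_one (ne_of_gt hx)] at h
  have hgx : 0 < Real.Gamma x := Real.Gamma_pos_of_pos hx
  have hgm : 0 < Real.Gamma (x + 1/2) := Real.Gamma_pos_of_pos (by linarith)
  have h2 : Real.Gamma (x + 1/2) ^ 2 ≤ (Real.sqrt x * Real.Gamma x) ^ 2 := by
    rw [mul_pow, Real.sq_sqrt hx.le]; nlinarith
  have h3 : Real.Gamma (x + 1/2) ≤ Real.sqrt x * Real.Gamma x := by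
    nlinarith [Real.sqrt_pos.2 hx, mul_pos (Real.sqrt_pos.2 hx) hgx]
  rw [gR, div_le_one (mul_pos (Real.sqrt_pos.2 hx) hgx)]
  exact h3

lemma gR_lower {x : ℝ} (hx : 0 < x) : Real.sqrt (x / (x + 1/2)) ≤ gR x := by
  have h := gamma_mid_sq_le (by linarith : (0:ℝ) < x + 1/2) (by linarith : (0:ℝ) < x + 3/2)
  have e1 : (x + 1/2 + (x + 3/2)) / 2 = x + 1 := by ring
  have e2 : (x : ℝ) + 3/2 = (x + 1/2) + 1 := by ring
  rw [e1, e2, Real.Gamma_add_one (by positivity : (x:ℝ) + 1/2 ≠ 0),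
    Real.Gamma_add_one (ne_of_gt hx)] at h
  -- h : (x * Γ x)^2 ≤ Γ(x+1/2) * ((x+1/2) * Γ(x+1/2))
  have hgx : 0 < Real.Gamma x := Real.Gamma_pos_of_pos hx
  have hgm : 0 < Real.Gamma (x + 1/2) := Real.Gamma_pos_of_pos (by linarith)
  have hs : 0 < Real.sqrt x := Real.sqrt_pos.2 hx
  have hs2 : 0 < Real.sqrt (x + 1/2) := Real.sqrt_pos.2 (by linarith)
  have key : x * Real.Gamma x ≤ Real.sqrt (x + 1/2) * Real.Gamma (x + 1/2) := by
    have h2 : (x * Real.Gamma x)^2 ≤ (Real.sqrt (x + 1/2) * Real.Gamma (x + 1/2))^2 := by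
      rw [mul_pow, mul_pow, Real.sq_sqrt (by linarith : (0:ℝ) ≤ x + 1/2)]; nlinarith
    nlinarith [mul_pos hx hgx, mul_pos hs2 hgm]
  rw [gR, le_div_iff₀ (mul_pos hs hgx), Real.sqrt_div hx.le,
    div_mul_eq_mul_div, div_le_iff₀ hs2]
  calc Real.sqrt x * (Real.sqrt x * Real.Gamma x) = x * Real.Gamma x := by
        rw [← mul_assoc, Real.mul_self_sqrt hx.le]
    _ ≤ Real.Gamma (x + 1/2) * Real.sqrt (x + 1/2) := by linarith

lemma gR_pos {x : ℝ} (hx : 0 < x) : 0 < gR x := by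
  have := Real.Gamma_pos_of_pos (by linarith : (0:ℝ) < x + 1/2)
  have := Real.Gamma_pos_of_pos hx
  have := Real.sqrt_pos.2 hx
  exact div_pos ‹0 < Real.Gamma (x + 1/2)› (by positivity)

lemma gR_tendsto : Tendsto gR atTop (nhds 1) := by
  have hlo : Tendsto (fun x : ℝ => Real.sqrt (x / (x + 1/2))) atTop (nhds 1) := by
    have h1 : Tendsto (fun x : ℝ => x / (x + 1/2)) atTop (nhds 1) := by
      have := Filter.Tendsto.div_atTop (f := fun _ : ℝ => (1:ℝ)/2) tendsto_const_nhds
        (tendsto_atTop_add_const_right atTop (1/2 : ℝ) tendsto_id)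
      have h2 : Tendsto (fun x : ℝ => 1 - (1/2) / (x + 1/2)) atTop (nhds (1 - 0)) :=
        tendsto_const_nhds.sub this
      rw [sub_zero] at h2
      refine h2.congr' ?_
      filter_upwards [eventually_gt_atTop (0:ℝ)] with x hx
      field_simp
      ring
    have := (Real.continuous_sqrt.tendsto 1).comp h1
    simpa [Function.comp_def] using this
  refine tendsto_of_tendsto_of_tendsto_of_le_of_le' hlo tendsto_const_nhds ?_ ?_
  · filter_upwards [eventually_gt_atTop (0:ℝ)] with x hx using gR_lower hx
  · filter_upwards [eventually_gt_atTop (0:ℝ)] with x hx using gR_le_one hx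

lemma EW_eq_gR (m : ℕ) (hm : 0 < m) : EW m = gR ((m : ℝ) / 2) := by
  have hm' : (0:ℝ) < m := Nat.cast_pos.2 hm
  have hC : ∀ w ∈ Set.Ioi (0:ℝ), w * fW m w =
      (2 * (m:ℝ) ^ ((m:ℝ)/2) / (2 ^ ((m:ℝ)/2) * Real.Gamma ((m:ℝ)/2))) *
        (w ^ (m:ℝ) * Real.exp (-((m:ℝ)/2) * w ^ (2:ℝ))) := by
    intro w hw
    have hw' : (0:ℝ) < w := hw
    have hq : (0:ℝ) < (m:ℝ) * w ^ 2 := by positivity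
    rw [fW, chisqPDF, if_pos hq]
    have h1 : ((m:ℝ) * w ^ 2) ^ ((m:ℝ)/2 - 1)
        = (m:ℝ) ^ ((m:ℝ)/2 - 1) * w ^ ((m:ℝ) - 2) := by
      rw [Real.mul_rpow hm'.le (by positivity), ← Real.rpow_natCast w 2,
        ← Real.rpow_mul hw'.le]
      push_cast
      rw [show (2:ℝ)*((m:ℝ)/2-1) = (m:ℝ)-2 by ring]
    have h2 : Real.exp (-((m:ℝ) * w ^ 2) / 2) = Real.exp (-((m:ℝ)/2) * w ^ (2:ℝ)) := by
      rw [Real.rpow_two]; ring_nf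
    rw [h1, h2]
    have h3 : (m:ℝ) ^ ((m:ℝ)/2 - 1) = (m:ℝ) ^ ((m:ℝ)/2) / m := by
      rw [Real.rpow_sub hm', Real.rpow_one]
    have h4 : w * (w ^ ((m:ℝ) - 2) * w) = w ^ m := by
      rw [← Real.rpow_natCast w m]
      conv_rhs => rw [show (m:ℝ) = 1 + ((m:ℝ)-2) + 1 by ring]
      rw [Real.rpow_add hw', Real.rpow_add hw', Real.rpow_one]
      ring
    have hG : (0:ℝ) < Real.Gamma ((m:ℝ)/2) := Real.Gamma_pos_of_pos (by positivity)
    have hD : (2:ℝ) ^ ((m:ℝ)/2) * Real.Gamma ((m:ℝ)/2) ≠ 0 := by positivity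
    rw [h3]
    field_simp
    rw [← Real.rpow_natCast w m] at h4
    rw [← h4]
    ring
  rw [EW, setIntegral_congr_fun measurableSet_Ioi hC, integral_const_mul,
    integral_rpow_mul_exp_neg_mul_rpow two_pos
      (lt_of_lt_of_le (by norm_num : (-1:ℝ) < 0) hm'.le)
      (by positivity : (0:ℝ) < (m:ℝ)/2)]
  rw [gR, show ((m:ℝ)+1)/2 = (m:ℝ)/2 + 1/2 by ring]
  have hb : (0:ℝ) < (m:ℝ)/2 := by positivity
  have hG : (0:ℝ) < Real.Gamma ((m:ℝ)/2) := Real.Gamma_pos_of_pos hb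
  have h1 : ((m:ℝ):ℝ) ^ ((m:ℝ)/2) ≠ 0 := by positivity
  have h2 : (2:ℝ) ^ ((m:ℝ)/2) ≠ 0 := by positivity
  have h3 : Real.sqrt ((m:ℝ)/2) ≠ 0 := by positivity
  have key : ((m:ℝ)/2) ^ (-((m:ℝ) + 1)/2)
      = 2 ^ ((m:ℝ)/2) / ((m:ℝ) ^ ((m:ℝ)/2) * Real.sqrt ((m:ℝ)/2)) := by
    rw [show (-((m:ℝ)+1)/2) = -((m:ℝ)/2) + -(1/2 : ℝ) by ring, Real.rpow_add hb,
      Real.rpow_neg hb.le ((m:ℝ)/2), Real.rpow_neg hb.le (1/2 : ℝ),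
      Real.sqrt_eq_rpow, Real.div_rpow (Nat.cast_nonneg m) (by norm_num : (0:ℝ) ≤ 2)]
    field_simp
  rw [key]
  field_simp


lemma aux_pow_tendsto (a : ℕ → ℝ) (z : ℝ) (ha0 : ∀ m, 0 ≤ a m)
    (haz : Tendsto a atTop (nhds z)) (e : ℕ → ℝ) (c : ℝ)
    (he : Tendsto (fun m : ℕ => e m / m) atTop (nhds c)) :
    Tendsto (fun m : ℕ => (1 + a m / m) ^ (e m)) atTop (nhds (Real.exp (c * z))) := by
  have hbase : ∀ m : ℕ, (0:ℝ) < 1 + a m / m := by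
    intro m
    have : (0:ℝ) ≤ a m / m := div_nonneg (ha0 m) (Nat.cast_nonneg m)
    linarith
  -- L m = m * log(1 + a m / m) → z
  have hL : Tendsto (fun m : ℕ => (m:ℝ) * Real.log (1 + a m / m)) atTop (nhds z) := by
    have hdiv : Tendsto (fun m : ℕ => a m / m) atTop (nhds 0) := by
      have := haz.mul (tendsto_one_div_atTop_nhds_zero_nat)
      simpa [div_eq_mul_inv, one_div] using this
    have hlow : Tendsto (fun m : ℕ => a m / (1 + a m / m)) atTop (nhds z) := by
      have hden : Tendsto (fun m : ℕ => 1 + a m / m) atTop (nhds 1) := by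
        simpa using tendsto_const_nhds.add hdiv
      have := haz.div hden one_ne_zero
      rw [div_one] at this
      exact this
    refine tendsto_of_tendsto_of_tendsto_of_le_of_le' hlow haz ?_ ?_
    · filter_upwards [eventually_gt_atTop 0] with m hm
      have hm' : (0:ℝ) < m := Nat.cast_pos.2 hm
      have hlog : a m / m / (1 + a m / m) ≤ Real.log (1 + a m / m) := by
        have h1 : Real.log (1 + a m / m)⁻¹ ≤ (1 + a m / m)⁻¹ - 1 :=
          Real.log_le_sub_one_of_pos (inv_pos.2 (hbase m))
        rw [Real.log_inv] at h1
        have hd : ((m:ℝ) + a m) ≠ 0 := ne_of_gt (by linarith [ha0 m])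
        have h2 : (1 + a m / m)⁻¹ - 1 = -(a m / m / (1 + a m / m)) := by
          field_simp
          ring
        rw [h2] at h1
        linarith
      calc a m / (1 + a m / m) = (m:ℝ) * (a m / m / (1 + a m / m)) := by
            field_simp
        _ ≤ (m:ℝ) * Real.log (1 + a m / m) := by
            exact mul_le_mul_of_nonneg_left hlog hm'.le
    · filter_upwards [eventually_gt_atTop 0] with m hm
      have hm' : (0:ℝ) < m := Nat.cast_pos.2 hm
      have hlog : Real.log (1 + a m / m) ≤ a m / m := by
        have := Real.log_le_sub_one_of_pos (hbase m)
        linarith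
      calc (m:ℝ) * Real.log (1 + a m / m) ≤ (m:ℝ) * (a m / m) :=
            mul_le_mul_of_nonneg_left hlog hm'.le
        _ = a m := by field_simp
  have hEL : Tendsto (fun m : ℕ => e m * Real.log (1 + a m / m)) atTop (nhds (c * z)) := by
    have := he.mul hL
    refine this.congr' ?_
    filter_upwards [eventually_gt_atTop 0] with m hm
    have hm' : ((m:ℝ)) ≠ 0 := ne_of_gt (Nat.cast_pos.2 hm)
    field_simp
  have := (Real.continuous_exp.tendsto _).comp hEL
  refine this.congr fun m => ?_
  rw [Function.comp_apply, Real.rpow_def_of_pos (hbase m)]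
  ring_nf


noncomputable def npdf (x : ℝ) : ℝ := (Real.sqrt (2 * Real.pi))⁻¹ * Real.exp (-(1/2) * x ^ 2)

lemma npdf_pos (x : ℝ) : 0 < npdf x := by
  have := Real.pi_pos
  rw [npdf]; positivity

lemma npdf_integrable : Integrable npdf :=
  (integrable_exp_neg_mul_sq (by norm_num : (0:ℝ) < 1/2)).const_mul _

lemma integral_npdf : ∫ x, npdf x = 1 := by
  simp only [npdf]
  rw [integral_const_mul, integral_gaussian, show Real.pi / (1/2) = 2 * Real.pi by ring]
  have : Real.sqrt (2 * Real.pi) ≠ 0 := by have := Real.pi_pos; positivity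
  field_simp

noncomputable def Gf (t : ℝ) : ℝ :=
  (∫ x in (0:ℝ)..t, npdf x) - ∫ x in (0:ℝ)..(-t), npdf x

lemma Gf_eq_interval (t : ℝ) : Gf t = ∫ x in (-t)..t, npdf x := by
  have h1 : IntervalIntegrable npdf volume (-t) 0 := npdf_integrable.intervalIntegrable
  have h2 : IntervalIntegrable npdf volume 0 t := npdf_integrable.intervalIntegrable
  rw [Gf, ← intervalIntegral.integral_add_adjacent_intervals h1 h2,
    intervalIntegral.integral_symm 0 (-t)]
  ring

lemma Gf_Ioo {t : ℝ} (ht : 0 ≤ t) : ∫ x in Ioo (-t) t, npdf x = Gf t := by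
  rw [Gf_eq_interval, intervalIntegral.integral_of_le (by linarith), integral_Ioc_eq_integral_Ioo]

lemma continuous_Gf : Continuous Gf := by
  have h := intervalIntegral.continuous_primitive
    (fun a b => npdf_integrable.intervalIntegrable (a := a) (b := b)) 0
  exact h.sub (h.comp continuous_neg)

lemma Gf_strictMonoOn {s t : ℝ} (hs : 0 ≤ s) (hst : s < t) : Gf s < Gf t := by
  have h1 : (∫ x in (0:ℝ)..t, npdf x) - ∫ x in (0:ℝ)..s, npdf x = ∫ x in s..t, npdf x :=
    intervalIntegral.integral_interval_sub_left npdf_integrable.intervalIntegrable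
      npdf_integrable.intervalIntegrable
  have h2 : (∫ x in (0:ℝ)..(-s), npdf x) - ∫ x in (0:ℝ)..(-t), npdf x
      = ∫ x in (-t)..(-s), npdf x :=
    intervalIntegral.integral_interval_sub_left npdf_integrable.intervalIntegrable
      npdf_integrable.intervalIntegrable
  have hp1 : 0 < ∫ x in s..t, npdf x :=
    intervalIntegral.intervalIntegral_pos_of_pos npdf_integrable.intervalIntegrable npdf_pos hst
  have hp2 : 0 ≤ ∫ x in (-t)..(-s), npdf x :=
    intervalIntegral.integral_nonneg (by linarith) (fun u _ => (npdf_pos u).le)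
  have : Gf t - Gf s = (∫ x in s..t, npdf x) + ∫ x in (-t)..(-s), npdf x := by
    rw [Gf, Gf, ← h1, ← h2]; ring
  linarith

lemma Gf_zero : Gf 0 = 0 := by simp [Gf]

lemma Gf_tendsto_one : Tendsto Gf atTop (nhds 1) := by
  have h := MeasureTheory.intervalIntegral_tendsto_integral npdf_integrable
      (tendsto_neg_atTop_atBot) (tendsto_id (α := ℝ)) (l := atTop)
  rw [integral_npdf] at h
  exact h.congr fun t => (Gf_eq_interval t).symm

lemma exists_z {α : ℝ} (hα : α ∈ Set.Ioo (0:ℝ) 1) : ∃ z : ℝ, 0 < z ∧ Gf z = 1 - α := by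
  obtain ⟨T, hT⟩ := ((Gf_tendsto_one.eventually (eventually_gt_nhds (show
      1 - α < 1 from by linarith [hα.1]))).and (eventually_ge_atTop (0:ℝ))).exists
  have hsub := intermediate_value_Icc hT.2 continuous_Gf.continuousOn
  rw [Gf_zero] at hsub
  have hmem : (1 - α) ∈ Icc (0:ℝ) (Gf T) := ⟨by linarith [hα.2], (hT.1).le⟩
  obtain ⟨z, hz, hGz⟩ := hsub hmem
  refine ⟨z, ?_, hGz⟩
  rcases eq_or_lt_of_le hz.1 with h | h
  · exfalso; rw [← h, Gf_zero] at hGz; linarith [hα.2, hα.1]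
  · exact h


lemma tPDF_zero_fun (x : ℝ) : tPDF 0 x = 0 := by
  simp [tPDF]

lemma continuous_tPDF (m : ℕ) : Continuous (tPDF m) := by
  refine continuous_const.mul ?_
  refine (continuous_const.add ((continuous_pow 2).div_const _)).rpow_const ?_
  intro x
  left
  have h : (0:ℝ) ≤ x ^ 2 / m := by positivity
  exact ne_of_gt (by linarith : (0:ℝ) < 1 + x ^ 2 / m)

lemma cC_eq (m : ℕ) (hm : 0 < m) :
    Real.Gamma (((m:ℝ)+1)/2) / (Real.sqrt ((m:ℝ) * Real.pi) * Real.Gamma ((m:ℝ)/2))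
      = gR ((m:ℝ)/2) * (Real.sqrt (2*Real.pi))⁻¹ := by
  have hm' : (0:ℝ) < m := Nat.cast_pos.2 hm
  have h1 : Real.sqrt ((m:ℝ)*Real.pi) = Real.sqrt ((m:ℝ)/2) * Real.sqrt (2*Real.pi) := by
    rw [← Real.sqrt_mul (by positivity : (0:ℝ) ≤ (m:ℝ)/2)]
    congr 1
    ring
  rw [gR, h1, show ((m:ℝ)+1)/2 = (m:ℝ)/2 + 1/2 by ring]
  ring

lemma tPDF_bounds (m : ℕ) (hm : 0 < m) (x : ℝ) :
    0 < tPDF m x ∧ tPDF m x ≤ (Real.sqrt (2*Real.pi))⁻¹ := by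
  have hm' : (0:ℝ) < m := Nat.cast_pos.2 hm
  have hpi := Real.pi_pos
  rw [tPDF, cC_eq m hm]
  have hbase : (1:ℝ) ≤ 1 + x ^ 2 / m := le_add_of_nonneg_right (by positivity)
  have hb0 : (0:ℝ) < 1 + x ^ 2 / m := lt_of_lt_of_le one_pos hbase
  have hRp := gR_pos (show (0:ℝ) < (m:ℝ)/2 by positivity)
  have hR1 := gR_le_one (show (0:ℝ) < (m:ℝ)/2 by positivity)
  have hinv : (0:ℝ) ≤ (Real.sqrt (2*Real.pi))⁻¹ := by positivity
  constructor
  · exact mul_pos (mul_pos hRp (by positivity)) (Real.rpow_pos_of_pos hb0 _)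
  · calc gR ((m:ℝ)/2) * (Real.sqrt (2*Real.pi))⁻¹ * (1 + x ^ 2 / m) ^ (-(((m:ℝ)+1)/2))
        ≤ (Real.sqrt (2*Real.pi))⁻¹ * 1 :=
          mul_le_mul (mul_le_of_le_one_left hinv hR1)
            (Real.rpow_le_one_of_one_le_of_nonpos hbase (neg_nonpos.2 (by positivity)))
            (Real.rpow_nonneg hb0.le _) hinv
    _ = (Real.sqrt (2*Real.pi))⁻¹ := mul_one _

lemma tPDF_tendsto (x : ℝ) : Tendsto (fun m : ℕ => tPDF m x) atTop (nhds (npdf x)) := by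
  have hc : Tendsto (fun m : ℕ => Real.Gamma (((m:ℝ)+1)/2) /
      (Real.sqrt ((m:ℝ) * Real.pi) * Real.Gamma ((m:ℝ)/2))) atTop
      (nhds ((Real.sqrt (2*Real.pi))⁻¹)) := by
    have hhalf : Tendsto (fun m : ℕ => (m:ℝ)/2) atTop atTop :=
      tendsto_natCast_atTop_atTop.atTop_div_const (by norm_num)
    have h2 := (gR_tendsto.comp hhalf).mul_const ((Real.sqrt (2*Real.pi))⁻¹)
    rw [one_mul] at h2
    refine h2.congr' ?_
    filter_upwards [eventually_gt_atTop 0] with m hm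
    exact (cC_eq m hm).symm
  have he : Tendsto (fun m : ℕ => (-(((m:ℝ)+1)/2)) / m) atTop (nhds (-(1/2))) := by
    have h0 : Tendsto (fun m : ℕ => -(1/2 + (1/2) * (1/(m:ℝ)))) atTop
        (nhds (-(1/2 + (1/2) * 0))) :=
      (tendsto_const_nhds.add (tendsto_one_div_atTop_nhds_zero_nat.const_mul _)).neg
    rw [show (1/2 : ℝ) + (1/2) * 0 = 1/2 by norm_num] at h0
    refine h0.congr' ?_
    filter_upwards [eventually_gt_atTop 0] with m hm
    have hm' : ((m:ℝ)) ≠ 0 := ne_of_gt (Nat.cast_pos.2 hm)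
    field_simp
  have hp := aux_pow_tendsto (fun _ => x ^ 2) (x ^ 2) (fun _ => sq_nonneg x)
      tendsto_const_nhds (fun m : ℕ => -(((m:ℝ)+1)/2)) (-(1/2)) he
  have := hc.mul hp
  rw [show (-(1/2 : ℝ)) * x ^ 2 = -(1/2) * x ^ 2 by ring] at this
  exact this

lemma F_tendsto {t : ℝ} (ht : 0 < t) :
    Tendsto (fun m : ℕ => ∫ x in Ioo (-t) t, tPDF m x) atTop (nhds (Gf t)) := by
  rw [← Gf_Ioo ht.le]
  refine MeasureTheory.tendsto_integral_of_dominated_convergence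
    (fun _ => (Real.sqrt (2*Real.pi))⁻¹)
    (fun n => (continuous_tPDF n).aestronglyMeasurable.restrict)
    (integrableOn_const measure_Ioo_lt_top.ne) ?_ ?_
  · intro n
    refine Eventually.of_forall fun x => ?_
    rcases Nat.eq_zero_or_pos n with h | h
    · subst h
      rw [tPDF_zero_fun, norm_zero]
      have := Real.pi_pos
      positivity
    · obtain ⟨h1, h2⟩ := tPDF_bounds n h x
      rw [Real.norm_eq_abs, abs_of_pos h1]
      exact h2
  · exact Eventually.of_forall fun x => tPDF_tendsto x

lemma F_mono (m : ℕ) (hm : 0 < m) {a b : ℝ} (hab : a ≤ b) :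
    ∫ x in Ioo (-a) a, tPDF m x ≤ ∫ x in Ioo (-b) b, tPDF m x := by
  refine setIntegral_mono_set ?_ ?_ ?_
  · exact ((continuous_tPDF m).continuousOn.integrableOn_Icc).mono_set Ioo_subset_Icc_self
  · exact Eventually.of_forall fun x => (tPDF_bounds m hm x).1.le
  · exact HasSubset.Subset.eventuallyLE (Ioo_subset_Ioo (neg_le_neg hab) hab)

lemma tm_tendsto {α : ℝ} (hα : α ∈ Set.Ioo (0:ℝ) 1) (tm : ℕ → ℝ)
    (htm : ∀ m : ℕ, 0 < m → 0 < tm m ∧ ∫ x in Set.Ioo (-(tm m)) (tm m), tPDF m x = 1 - α)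
    {z : ℝ} (hz : 0 < z) (hGz : Gf z = 1 - α) : Tendsto tm atTop (nhds z) := by
  rw [tendsto_order]
  constructor
  · intro a ha
    rcases le_or_gt a 0 with h | h
    · filter_upwards [eventually_gt_atTop 0] with m hm using lt_of_le_of_lt h (htm m hm).1
    · have hGa : Gf a < 1 - α := hGz ▸ Gf_strictMonoOn h.le ha
      have hev := (F_tendsto h).eventually_lt_const hGa
      filter_upwards [hev, eventually_gt_atTop 0] with m hFm hm
      by_contra hle
      push_neg at hle
      have hmono := F_mono m hm hle
      rw [(htm m hm).2] at hmono
      linarith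
  · intro b hb
    have hGb : 1 - α < Gf b := hGz ▸ Gf_strictMonoOn hz.le hb
    have hb0 : 0 < b := hz.trans hb
    have hev := (F_tendsto hb0).eventually_const_lt hGb
    filter_upwards [hev, eventually_gt_atTop 0] with m hFm hm
    by_contra hle
    push_neg at hle
    have hmono := F_mono m hm hle
    rw [(htm m hm).2] at hmono
    linarith



lemma EW_pos (m : ℕ) (hm : 0 < m) : 0 < EW m := by
  rw [EW_eq_gR m hm]
  exact gR_pos (by positivity)

lemma EW_tendsto : Tendsto (fun m : ℕ => EW m) atTop (nhds 1) := by
  have hhalf : Tendsto (fun m : ℕ => (m:ℝ)/2) atTop atTop :=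
    tendsto_natCast_atTop_atTop.atTop_div_const (by norm_num)
  refine (gR_tendsto.comp hhalf).congr' ?_
  filter_upwards [eventually_gt_atTop 0] with m hm
  exact (EW_eq_gR m hm).symm

noncomputable def Bv (m : ℕ) (t : ℝ) : ℝ := (1 + t ^ 2 / m) ^ (((m:ℝ) + 2) / 2)

lemma lamEq_iff (m : ℕ) (hm : 0 < m) {t l : ℝ} (ht : 0 < t) (hl : l ∈ Set.Ioo (0:ℝ) 1) :
    lamEq m t l ↔ l = (Real.sqrt (2/Real.pi) * t * EW m) /
      (Real.sqrt (2/Real.pi) * t * EW m + Bv m t) := by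
  have hm' : (0:ℝ) < m := Nat.cast_pos.2 hm
  have hpi := Real.pi_pos
  have hE := EW_pos m hm
  set k := Real.sqrt (2/Real.pi) * t * EW m with hk
  have hkpos : 0 < k := by rw [hk]; positivity
  have hBpos : 0 < Bv m t := Real.rpow_pos_of_pos (by positivity) _
  obtain ⟨hl0, hl1⟩ := hl
  have hl1' : 0 < 1 - l := by linarith
  have hX : Real.sqrt (2/Real.pi) * (1 - l) * t * EW m / l = k * (1 - l) / l := by
    rw [hk]; ring
  have hXpos : 0 < k * (1 - l) / l := div_pos (mul_pos hkpos hl1') hl0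
  have hsm : 0 < Real.sqrt m := Real.sqrt_pos.2 hm'
  constructor
  · intro h
    rw [lamEq, hX] at h
    have h2 : Real.sqrt ((k*(1-l)/l) ^ ((2:ℝ)/((m:ℝ)+2)) - 1) = t / Real.sqrt m := by
      rw [eq_div_iff hsm.ne', mul_comm]
      exact h
    have hposarg : 0 < Real.sqrt ((k*(1-l)/l) ^ ((2:ℝ)/((m:ℝ)+2)) - 1) := by
      rw [h2]; exact div_pos ht hsm
    have hnn : 0 ≤ (k*(1-l)/l) ^ ((2:ℝ)/((m:ℝ)+2)) - 1 := (Real.sqrt_pos.mp hposarg).le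
    have h3 : (k*(1-l)/l) ^ ((2:ℝ)/((m:ℝ)+2)) - 1 = (t / Real.sqrt m) ^ 2 := by
      rw [← Real.sq_sqrt hnn, h2]
    have ht2 : (t / Real.sqrt m) ^ 2 = t ^ 2 / m := by
      rw [div_pow, Real.sq_sqrt hm'.le]
    have h4 : (k*(1-l)/l) ^ ((2:ℝ)/((m:ℝ)+2)) = 1 + t^2/m := by
      rw [ht2] at h3; linarith
    have h5 : k*(1-l)/l = Bv m t := by
      have hc := congrArg (fun y : ℝ => y ^ (((m:ℝ)+2)/2)) h4
      rw [← Real.rpow_mul hXpos.le,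
        show ((2:ℝ)/((m:ℝ)+2)) * (((m:ℝ)+2)/2) = 1 by
          field_simp, Real.rpow_one] at hc
      rw [hc, Bv]
    rw [eq_div_iff (ne_of_gt (by linarith : (0:ℝ) < k + Bv m t))]
    have h6 : k * (1-l) = Bv m t * l := by
      field_simp at h5
      linarith
    nlinarith [h6]
  · intro h
    have hX2 : k * (1 - l) / l = Bv m t := by
      rw [h]
      field_simp
      ring
    rw [lamEq, hX, hX2]
    have hBpow : (Bv m t) ^ ((2:ℝ)/((m:ℝ)+2)) = 1 + t^2/m := by
      rw [Bv, ← Real.rpow_mul (by positivity),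
        show (((m:ℝ)+2)/2) * ((2:ℝ)/((m:ℝ)+2)) = 1 by field_simp, Real.rpow_one]
    rw [hBpow, show 1 + t^2/(m:ℝ) - 1 = t^2/m by ring,
      Real.sqrt_div (sq_nonneg t), Real.sqrt_sq ht.le]
    field_simp

theorem stmt9 (α : ℝ) (hα : α ∈ Set.Ioo (0 : ℝ) 1) (tm : ℕ → ℝ)
    (htm : ∀ m : ℕ, 0 < m → 0 < tm m ∧ ∫ x in Set.Ioo (-(tm m)) (tm m), tPDF m x = 1 - α) :
    (∀ m : ℕ, 0 < m → ∃! l : ℝ, l ∈ Set.Ioo (0 : ℝ) 1 ∧ lamEq m (tm m) l) ∧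
      ∀ lam : ℕ → ℝ, (∀ m : ℕ, 0 < m → lam m ∈ Set.Ioo (0 : ℝ) 1 ∧ lamEq m (tm m) (lam m)) →
        ∃ L ∈ Set.Ioo (0 : ℝ) 1, Tendsto lam atTop (nhds L) := by
  have hpi := Real.pi_pos
  constructor
  · intro m hm
    obtain ⟨ht, -⟩ := htm m hm
    have hE := EW_pos m hm
    set k := Real.sqrt (2/Real.pi) * tm m * EW m with hk
    have hkpos : 0 < k := by rw [hk]; positivity
    have hm' : (0:ℝ) < m := Nat.cast_pos.2 hm
    have hB : 0 < Bv m (tm m) := Real.rpow_pos_of_pos (by positivity) _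
    have hmem : k / (k + Bv m (tm m)) ∈ Set.Ioo (0:ℝ) 1 := by
      constructor
      · exact div_pos hkpos (by linarith)
      · rw [div_lt_one (by linarith)]
        linarith
    refine ⟨k / (k + Bv m (tm m)), ⟨hmem, ?_⟩, ?_⟩
    · exact (lamEq_iff m hm ht hmem).mpr rfl
    · intro l hl
      exact (lamEq_iff m hm ht hl.1).mp hl.2
  · intro lam hlam
    obtain ⟨z, hz, hGz⟩ := exists_z hα
    have htmz := tm_tendsto hα tm htm hz hGz
    have hk : Tendsto (fun m : ℕ => Real.sqrt (2/Real.pi) * tm m * EW m) atTop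
        (nhds (Real.sqrt (2/Real.pi) * z * 1)) :=
      (tendsto_const_nhds.mul htmz).mul EW_tendsto
    have hB : Tendsto (fun m : ℕ => Bv m (tm m)) atTop
        (nhds (Real.exp ((1/2) * z ^ 2))) := by
      have he : Tendsto (fun m : ℕ => (((m:ℝ)+2)/2) / m) atTop (nhds (1/2)) := by
        have h0 : Tendsto (fun m : ℕ => 1/2 + 1/(m:ℝ)) atTop (nhds (1/2 + 0)) :=
          tendsto_const_nhds.add tendsto_one_div_atTop_nhds_zero_nat
        rw [add_zero] at h0
        refine h0.congr' ?_
        filter_upwards [eventually_gt_atTop 0] with m hm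
        have hm' : ((m:ℝ)) ≠ 0 := ne_of_gt (Nat.cast_pos.2 hm)
        field_simp
      exact aux_pow_tendsto (fun m => tm m ^ 2) (z ^ 2) (fun m => sq_nonneg _)
        (htmz.pow 2) (fun m : ℕ => ((m:ℝ)+2)/2) (1/2) he
    set K := Real.sqrt (2/Real.pi) * z * 1 with hK
    have hKpos : 0 < K := by rw [hK]; positivity
    have hBz : 0 < Real.exp ((1/2) * z ^ 2) := Real.exp_pos _
    have hL : Tendsto lam atTop (nhds (K / (K + Real.exp ((1/2) * z ^ 2)))) := by
      have hdiv := hk.div (hk.add hB) (ne_of_gt (by linarith : (0:ℝ) < K + Real.exp ((1/2) * z ^ 2)))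
      refine hdiv.congr' ?_
      filter_upwards [eventually_gt_atTop 0] with m hm
      obtain ⟨hlmem, hleq⟩ := hlam m hm
      exact ((lamEq_iff m hm (htm m hm).1 hlmem).mp hleq).symm
    refine ⟨_, ⟨div_pos hKpos (by linarith), ?_⟩, hL⟩
    rw [div_lt_one (by linarith)]
    linarith
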